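/- Let Ω ⊆ ℝ^d be a bounded measurable set, let x_1, …, x_N ∈ ℝ^d be pairwise distinct, let ν ∈ ℝ^N, and let K_p(ψ) = ∫_Ω min(0, min_i (‖x − x_i‖² − ψ_i)) dx + Σ_i ψ_i ν_i. Then for every ψ ∈ ℝ^N and every index i, the function t ↦ K_p(ψ + t e_i) (where e_i is the i-th standard basis vector) is differentiable at t = 0 with derivative ν_i − |V_i^ψ|, the Lebesgue volume of the partial-transport cell of index i. -/

import Mathlib

open MeasureTheory

lemma aux_min_inf' {N : ℕ} (i : Fin N) (g : Fin N → ℝ) (v : ℝ) :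
    min 0 (Finset.univ.inf' ⟨i, Finset.mem_univ i⟩ (fun j => if j = i then v else g j))
      = min (Finset.univ.inf' ⟨i, Finset.mem_univ i⟩ (fun j => if j = i then 0 else g j)) v := by
  apply le_antisymm
  · refine le_min (Finset.le_inf' _ _ fun j _ => ?_) ?_
    · by_cases h : j = i
      · simpa [h] using min_le_left 0 _
      · refine (min_le_right _ _).trans ((Finset.inf'_le _ (Finset.mem_univ j)).trans ?_)
        simp [h]
    · refine (min_le_right _ _).trans ((Finset.inf'_le _ (Finset.mem_univ i)).trans ?_)
      simp
  · refine le_min ?_ (Finset.le_inf' _ _ fun j _ => ?_)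
    · refine (min_le_left _ _).trans ((Finset.inf'_le _ (Finset.mem_univ i)).trans ?_)
      simp
    · by_cases h : j = i
      · simpa [h] using min_le_right _ v
      · refine (min_le_left _ _).trans ((Finset.inf'_le _ (Finset.mem_univ j)).trans ?_)
        simp [h]

lemma null_hyperplane {d : ℕ} (v : EuclideanSpace ℝ (Fin d)) (hv : v ≠ 0) (c : ℝ) :
    volume {p : EuclideanSpace ℝ (Fin d) | (inner ℝ v p : ℝ) = c} = 0 := by
  set p₀ : EuclideanSpace ℝ (Fin d) := (c / ‖v‖ ^ 2) • v with hp₀def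
  have hv2 : ‖v‖ ^ 2 ≠ 0 := by
    simpa using hv
  have hp₀ : (inner ℝ v p₀ : ℝ) = c := by
    rw [hp₀def, real_inner_smul_right, real_inner_self_eq_norm_sq, div_mul_cancel₀ _ hv2]
  set K : Submodule ℝ (EuclideanSpace ℝ (Fin d)) := LinearMap.ker (innerSL ℝ v).toLinearMap with hK
  have hKne : K ≠ ⊤ := by
    intro h
    apply hv
    have : v ∈ K := h ▸ Submodule.mem_top
    rw [hK, LinearMap.mem_ker] at this
    have h2 : (inner ℝ v v : ℝ) = 0 := this
    exact (inner_self_eq_zero (𝕜 := ℝ)).mp h2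
  have hset : {p : EuclideanSpace ℝ (Fin d) | (inner ℝ v p : ℝ) = c}
      = (fun p => p + (-p₀)) ⁻¹' (K : Set (EuclideanSpace ℝ (Fin d))) := by
    ext p
    simp only [Set.mem_setOf_eq, Set.mem_preimage, SetLike.mem_coe, hK, LinearMap.mem_ker]
    rw [show ((innerSL ℝ v).toLinearMap (p + -p₀) : ℝ) = inner ℝ v (p + -p₀) from rfl]
    rw [inner_add_right, inner_neg_right, hp₀]
    constructor <;> intro h <;> linarith
  rw [hset, measure_preimage_add_right]
  exact Measure.addHaar_submodule volume K hKne

/-- The partial-transport cell of index `i`. -/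
def potCell {d N : ℕ} (Ω : Set (EuclideanSpace ℝ (Fin d)))
    (x : Fin N → EuclideanSpace ℝ (Fin d)) (ψ : Fin N → ℝ) (i : Fin N) :
    Set (EuclideanSpace ℝ (Fin d)) :=
  {p ∈ Ω | (∀ j, ‖p - x i‖ ^ 2 - ψ i ≤ ‖p - x j‖ ^ 2 - ψ j) ∧ ‖p - x i‖ ^ 2 ≤ ψ i}

/-- The partial-transport dual functional `K_p` has partial derivative `νᵢ - |Vᵢ^ψ|`
in the direction of the `i`-th standard basis vector. -/
theorem partial_transport_dual_partial_deriv
    (d N : ℕ) (hd : 1 ≤ d)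
    (Ω : Set (EuclideanSpace ℝ (Fin d)))
    (hΩm : MeasurableSet Ω) (hΩb : Bornology.IsBounded Ω)
    (x : Fin N → EuclideanSpace ℝ (Fin d)) (hx : Function.Injective x)
    (ν : Fin N → ℝ) (ψ : Fin N → ℝ) (i : Fin N) :
    HasDerivAt (fun t : ℝ =>
        (∫ p in Ω, min 0 (Finset.univ.inf' ⟨i, Finset.mem_univ i⟩
            (fun j => ‖p - x j‖ ^ 2 - (ψ j + t * (Pi.single i (1 : ℝ) : Fin N → ℝ) j)))) +
          ∑ j, (ψ j + t * (Pi.single i (1 : ℝ) : Fin N → ℝ) j) * ν j)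
      (ν i - (volume (potCell Ω x ψ i)).toReal) 0 := by
  classical
  haveI : Nonempty (Fin d) := ⟨⟨0, hd⟩⟩
  haveI : Nontrivial (EuclideanSpace ℝ (Fin d)) := by
    refine ⟨0, EuclideanSpace.single ⟨0, hd⟩ 1, fun h => ?_⟩
    have := congrArg (fun w : EuclideanSpace ℝ (Fin d) => w ⟨0, hd⟩) h.symm
    simp [EuclideanSpace.single_apply] at this
  set A : EuclideanSpace ℝ (Fin d) → ℝ := fun p => ‖p - x i‖ ^ 2 - ψ i with hA
  set C : EuclideanSpace ℝ (Fin d) → ℝ := fun p => Finset.univ.inf' ⟨i, Finset.mem_univ i⟩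
      (fun j => if j = i then 0 else ‖p - x j‖ ^ 2 - ψ j) with hC
  -- rewrite the integrand
  have hrw : ∀ (t : ℝ) (p : EuclideanSpace ℝ (Fin d)),
      min 0 (Finset.univ.inf' ⟨i, Finset.mem_univ i⟩
        (fun j => ‖p - x j‖ ^ 2 - (ψ j + t * (Pi.single i (1 : ℝ) : Fin N → ℝ) j)))
      = min (C p) (A p - t) := by
    intro t p
    have h1 : (fun j => ‖p - x j‖ ^ 2 - (ψ j + t * (Pi.single i (1 : ℝ) : Fin N → ℝ) j))
        = fun j => if j = i then (A p - t) else (‖p - x j‖ ^ 2 - ψ j) := by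
      funext j
      rcases eq_or_ne j i with rfl | h
      · simp [hA]; ring
      · simp [Pi.single_apply, h]
    rw [h1, aux_min_inf' i (fun j => ‖p - x j‖ ^ 2 - ψ j) (A p - t)]
  -- continuity facts
  have hcont : ∀ j, Continuous (fun p : EuclideanSpace ℝ (Fin d) => ‖p - x j‖ ^ 2 - ψ j) := fun j =>
    (((continuous_id.sub continuous_const).norm).pow 2).sub continuous_const
  have hCcont : Continuous C := by
    apply Continuous.finset_inf'_apply
    intro j _
    rcases eq_or_ne j i with rfl | h
    · simp only [if_pos rfl]; exact continuous_const
    · simp only [if_neg h]; exact hcont j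
  have hAcont : Continuous A := hcont i
  -- cell measurability
  have hcell : MeasurableSet (potCell Ω x ψ i) := by
    have : potCell Ω x ψ i = Ω ∩ ((⋂ j, {p : EuclideanSpace ℝ (Fin d) | ‖p - x i‖ ^ 2 - ψ i ≤ ‖p - x j‖ ^ 2 - ψ j})
        ∩ {p : EuclideanSpace ℝ (Fin d) | ‖p - x i‖ ^ 2 ≤ ψ i}) := by
      ext p
      simp only [potCell, Set.mem_setOf_eq, Set.mem_inter_iff, Set.mem_iInter]
    rw [this]
    refine hΩm.inter (((isClosed_iInter fun j => isClosed_le (hcont i) (hcont j)).inter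
      (isClosed_le (((continuous_id.sub continuous_const).norm).pow 2)
        continuous_const)).measurableSet)
  -- the a.e. derivative
  set F' : EuclideanSpace ℝ (Fin d) → ℝ := fun p => (potCell Ω x ψ i).indicator (fun _ => (-1 : ℝ)) p with hF'
  -- bad set is null
  set B : Set (EuclideanSpace ℝ (Fin d)) := {p : EuclideanSpace ℝ (Fin d) | ‖p - x i‖ ^ 2 = ψ i}
      ∪ ⋃ j ∈ ({i}ᶜ : Set (Fin N)), {p : EuclideanSpace ℝ (Fin d) | A p = ‖p - x j‖ ^ 2 - ψ j} with hB
  have hBnull : volume B = 0 := by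
    rw [hB]
    refine measure_union_null ?_ (measure_biUnion_null_iff (Set.to_countable _) |>.2 fun j hj => ?_)
    · refine measure_mono_null (fun p hp => ?_) (Measure.addHaar_sphere volume (x i) (Real.sqrt (ψ i)))
      have hp' : ‖p - x i‖ ^ 2 = ψ i := hp
      have : ‖p - x i‖ = Real.sqrt (ψ i) := by
        rw [← hp', Real.sqrt_sq (norm_nonneg _)]
      simpa [Metric.mem_sphere, dist_eq_norm] using this
    · have hvne : (2 : ℝ) • (x j - x i) ≠ 0 := by
        simp only [ne_eq, smul_eq_zero, sub_eq_zero]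
        push_neg
        exact ⟨by norm_num, fun h => (Set.mem_compl_iff _ _).1 hj (by simpa using hx h)⟩
      refine measure_mono_null (fun p hp => ?_)
        (null_hyperplane ((2 : ℝ) • (x j - x i)) hvne (ψ i - ψ j + ‖x j‖ ^ 2 - ‖x i‖ ^ 2))
      have hp' : ‖p - x i‖ ^ 2 - ψ i = ‖p - x j‖ ^ 2 - ψ j := hp
      have e1 : ‖p - x i‖ ^ 2 = ‖p‖ ^ 2 - 2 * inner ℝ p (x i) + ‖x i‖ ^ 2 :=
        norm_sub_sq_real p (x i)
      have e2 : ‖p - x j‖ ^ 2 = ‖p‖ ^ 2 - 2 * inner ℝ p (x j) + ‖x j‖ ^ 2 :=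
        norm_sub_sq_real p (x j)
      show (inner ℝ ((2 : ℝ) • (x j - x i)) p : ℝ) = ψ i - ψ j + ‖x j‖ ^ 2 - ‖x i‖ ^ 2
      rw [real_inner_smul_left, inner_sub_left]
      rw [real_inner_comm p (x j), real_inner_comm p (x i)]
      rw [e1, e2] at hp'
      linarith
  -- pointwise derivative off the bad set
  have hANeC : ∀ p : EuclideanSpace ℝ (Fin d), p ∉ B → A p ≠ C p := by
    intro p hpB heq
    obtain ⟨j, -, hj⟩ := Finset.exists_mem_eq_inf' (⟨i, Finset.mem_univ i⟩ :
      (Finset.univ : Finset (Fin N)).Nonempty)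
      (fun j => if j = i then 0 else ‖p - x j‖ ^ 2 - ψ j)
    rcases eq_or_ne j i with rfl | h
    · apply hpB
      left
      have : A p = 0 := by rw [heq, hC]; simp only at hj ⊢; rw [hj]; simp
      simpa [hA, sub_eq_zero] using this
    · apply hpB
      right
      refine Set.mem_biUnion (by simpa using h) ?_
      have : C p = ‖p - x j‖ ^ 2 - ψ j := by rw [hC]; simp only at hj ⊢; rw [hj]; simp [h]
      simp only [Set.mem_setOf_eq, heq, this]
  -- a.e. differentiability
  have hdiff : ∀ᵐ p ∂(volume.restrict Ω),
      HasDerivAt (fun t : ℝ => min (C p) (A p - t)) (F' p) 0 := by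
    have h1 : ∀ᵐ p ∂(volume.restrict Ω), p ∈ Ω := ae_restrict_mem hΩm
    have h2 : ∀ᵐ p ∂(volume.restrict Ω), p ∉ B :=
      ae_restrict_of_ae (compl_mem_ae_iff.mpr hBnull)
    filter_upwards [h1, h2] with p hpΩ hpB
    rcases lt_or_gt_of_ne (hANeC p hpB) with h | h
    · -- A p < C p : p is in the cell, derivative -1
      have hmem : p ∈ potCell Ω x ψ i := by
        refine ⟨hpΩ, fun j => ?_, ?_⟩
        · rcases eq_or_ne j i with rfl | hji
          · exact le_refl _
          · refine h.le.trans ?_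
            have h3 := Finset.inf'_le
              (fun j => if j = i then (0 : ℝ) else ‖p - x j‖ ^ 2 - ψ j) (Finset.mem_univ j)
            simpa [hC, hji] using h3
        · have hC0 : C p ≤ 0 := by
            have h3 := Finset.inf'_le
              (fun j => if j = i then (0 : ℝ) else ‖p - x j‖ ^ 2 - ψ j) (Finset.mem_univ i)
            simpa [hC] using h3
          have h4 : A p ≤ 0 := h.le.trans hC0
          have h4' : ‖p - x i‖ ^ 2 - ψ i ≤ 0 := by rw [hA] at h4; exact h4
          linarith
      have hF'val : F' p = -1 := by
        rw [hF']; exact Set.indicator_of_mem hmem _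
      rw [hF'val]
      have hev : (fun t : ℝ => min (C p) (A p - t)) =ᶠ[nhds (0 : ℝ)] fun t => A p - t := by
        have h5 : ∀ᶠ t : ℝ in nhds 0, |t - 0| < C p - A p :=
          eventually_abs_sub_lt 0 (sub_pos.mpr h)
        filter_upwards [h5] with t ht
        have h6 : A p - t < C p := by
          rw [sub_zero] at ht
          rcases abs_lt.mp ht with ⟨h7, h8⟩
          linarith
        exact min_eq_right h6.le
      have h9 : HasDerivAt (fun t : ℝ => A p - t) (-1) 0 := by
        simpa using HasDerivAt.const_sub (A p) (hasDerivAt_id (0 : ℝ))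
      exact h9.congr_of_eventuallyEq hev
    · -- A p > C p : p is not in the cell, derivative 0
      have hnmem : p ∉ potCell Ω x ψ i := by
        intro hmem
        obtain ⟨-, hle, hle0⟩ := hmem
        have h3 : A p ≤ C p := by
          simp only [hC]
          refine Finset.le_inf' _ _ fun j _ => ?_
          simp only [hA]
          split_ifs with hji
          · subst hji; linarith [hle0]
          · exact hle j
        exact absurd h3 (not_le.mpr h)
      have hF'val : F' p = 0 := by
        rw [hF']; exact Set.indicator_of_notMem hnmem _
      rw [hF'val]
      have hev : (fun t : ℝ => min (C p) (A p - t)) =ᶠ[nhds (0 : ℝ)] fun _ => C p := by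
        have h5 : ∀ᶠ t : ℝ in nhds 0, |t - 0| < A p - C p :=
          eventually_abs_sub_lt 0 (sub_pos.mpr h)
        filter_upwards [h5] with t ht
        have h6 : C p < A p - t := by
          rw [sub_zero] at ht
          rcases abs_lt.mp ht with ⟨h7, h8⟩
          linarith
        exact min_eq_left h6.le
      exact (hasDerivAt_const (0 : ℝ) (C p)).congr_of_eventuallyEq hev
  -- apply dominated differentiation
  have hFcont : ∀ t : ℝ, Continuous (fun p : EuclideanSpace ℝ (Fin d) => min (C p) (A p - t)) :=
    fun t => hCcont.min (hAcont.sub continuous_const)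
  have hKcl : IsCompact (closure Ω) := hΩb.isCompact_closure
  have key := hasDerivAt_integral_of_dominated_loc_of_lip
    (μ := volume.restrict Ω) (F := fun (t : ℝ) (p : EuclideanSpace ℝ (Fin d)) => min (C p) (A p - t))
    (F' := F') (x₀ := (0 : ℝ)) (bound := fun _ => (1 : ℝ)) (s := Metric.ball 0 1) (Metric.ball_mem_nhds 0 one_pos)
    (Filter.Eventually.of_forall fun t => ((hFcont t).aestronglyMeasurable).restrict)
    ((((hFcont 0).continuousOn.integrableOn_compact hKcl).mono_set subset_closure))
    ((stronglyMeasurable_const.indicator hcell).aestronglyMeasurable)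
    (Filter.Eventually.of_forall fun p => ?_)
    (integrableOn_const hΩb.measure_lt_top.ne)
    hdiff
  rotate_left
  · -- Lipschitz bound
    have h1 : LipschitzWith 1 (fun t : ℝ => A p - t) := by
      refine LipschitzWith.of_dist_le_mul fun t s => ?_
      rw [Real.dist_eq, Real.dist_eq, NNReal.coe_one, one_mul]
      have h2 : (A p - t) - (A p - s) = s - t := by ring
      rw [h2, abs_sub_comm]
    have h3 : LipschitzWith 1 (fun t : ℝ => min (C p) (A p - t)) := h1.const_min (C p)
    have h4 : Real.nnabs (1 : ℝ) = 1 := by simp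
    rw [h4]
    exact h3.lipschitzOnWith
  -- compute the integral of F'
  have hint : ∫ p in Ω, F' p = -(volume (potCell Ω x ψ i)).toReal := by
    rw [hF', integral_indicator hcell, setIntegral_const, measureReal_restrict_apply hcell,
      Set.inter_eq_self_of_subset_left (fun p hp => hp.1)]
    simp [measureReal_def]
  -- derivative of the linear part
  have hsum : HasDerivAt (fun t : ℝ =>
      ∑ j, (ψ j + t * (Pi.single i (1 : ℝ) : Fin N → ℝ) j) * ν j) (ν i) 0 := by
    have h1 : ∀ j ∈ Finset.univ, HasDerivAt
        (fun t : ℝ => (ψ j + t * (Pi.single i (1 : ℝ) : Fin N → ℝ) j) * ν j)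
        ((Pi.single i (1 : ℝ) : Fin N → ℝ) j * ν j) 0 := by
      intro j _
      have h2 : HasDerivAt (fun t : ℝ => ψ j + t * (Pi.single i (1 : ℝ) : Fin N → ℝ) j)
          ((Pi.single i (1 : ℝ) : Fin N → ℝ) j) 0 := by
        simpa using ((hasDerivAt_id (0 : ℝ)).mul_const
          ((Pi.single i (1 : ℝ) : Fin N → ℝ) j)).const_add (ψ j)
      simpa using h2.mul_const (ν j)
    have h3 := HasDerivAt.fun_sum h1
    have h4 : ∑ j, (Pi.single i (1 : ℝ) : Fin N → ℝ) j * ν j = ν i := by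
      simp [Pi.single_apply, ite_mul]
    rwa [h4] at h3
  -- assemble
  have hval : ν i - (volume (potCell Ω x ψ i)).toReal = (∫ p in Ω, F' p) + ν i := by
    rw [hint]; ring
  rw [hval]
  simp only [hrw]
  exact key.2.add hsum
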